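/- Let α₁,…,αₙ be exchangeable real random variables, τ uniform on [0,1] independent of them, and P := (|{i : αᵢ < αₙ}| + τ·|{i : αᵢ = αₙ}|)/n. Then for every ε ∈ [0,1], Prob(P ≤ ε) = ε; in particular the conservative p-value P' := |{i : αᵢ ≤ αₙ}|/n satisfies Prob(P' ≤ ε) ≤ ε for all ε. -/

import Mathlib

open MeasureTheory Finset ProbabilityTheory

open Finset

namespace SmoothedPV

open scoped Classical

variable {m : ℕ}

noncomputable def Lc (x : Fin m → ℝ) (j : Fin m) : ℕ := (univ.filter (fun i => x i < x j)).card
noncomputable def Mc (x : Fin m → ℝ) (j : Fin m) : ℕ := (univ.filter (fun i => x i ≤ x j)).card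
noncomputable def Ec (x : Fin m → ℝ) (j : Fin m) : ℕ := (univ.filter (fun i => x i = x j)).card

lemma Ec_pos (x : Fin m → ℝ) (j : Fin m) : 0 < Ec x j :=
  Finset.card_pos.2 ⟨j, by simp [Ec]⟩

lemma Mc_eq (x : Fin m → ℝ) (j : Fin m) : Mc x j = Lc x j + Ec x j := by
  rw [Lc, Ec, Mc, ← Finset.card_union_of_disjoint]
  · congr 1
    ext i
    simp [le_iff_lt_or_eq]
  · rw [Finset.disjoint_filter]
    intro i _ h h'
    exact absurd h' (ne_of_lt h)

lemma Mc_le (x : Fin m → ℝ) (j : Fin m) : Mc x j ≤ m := by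
  simpa [Mc] using (Finset.card_filter_le (univ : Finset (Fin m)) (fun i => x i ≤ x j))

lemma Lc_eq_of_eq {x : Fin m → ℝ} {j k : Fin m} (h : x j = x k) : Lc x j = Lc x k := by
  simp [Lc, h]

lemma Mc_eq_of_eq {x : Fin m → ℝ} {j k : Fin m} (h : x j = x k) : Mc x j = Mc x k := by
  simp [Mc, h]

lemma Ec_eq_of_eq {x : Fin m → ℝ} {j k : Fin m} (h : x j = x k) : Ec x j = Ec x k := by
  simp [Ec, h]

lemma Mc_le_Lc_of_lt {x : Fin m → ℝ} {j k : Fin m} (h : x j < x k) : Mc x j ≤ Lc x k := by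
  apply Finset.card_le_card
  intro i hi
  simp only [Finset.mem_filter, Finset.mem_univ, true_and] at *
  exact lt_of_le_of_lt hi h

/-- the slice set at level t equals a value-class -/
lemma slice (x : Fin m → ℝ) (t : ℕ) (ht : t < m) :
    ∃ j₀ : Fin m, Lc x j₀ ≤ t ∧ t < Mc x j₀ ∧
      (univ.filter (fun j => Lc x j ≤ t ∧ t < Mc x j))
      = univ.filter (fun j => x j = x j₀) := by
  have hm : 0 < m := lt_of_le_of_lt (Nat.zero_le _) ht
  -- S = indices with Mc > t; nonempty via max
  haveI : Nonempty (Fin m) := ⟨⟨0, hm⟩⟩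
  obtain ⟨jmax, -, hmax⟩ := Finset.exists_max_image (univ : Finset (Fin m)) x
    Finset.univ_nonempty
  have hSne : (univ.filter (fun j => t < Mc x j)).Nonempty := by
    refine ⟨jmax, Finset.mem_filter.2 ⟨Finset.mem_univ _, ?_⟩⟩
    have : (univ.filter (fun i => x i ≤ x jmax)) = univ := by
      apply Finset.filter_true_of_mem
      intro i _; exact hmax i (Finset.mem_univ i)
    rw [Mc, this, Finset.card_univ, Fintype.card_fin]
    exact ht
  obtain ⟨j₀, hj₀S, hmin⟩ := Finset.exists_min_image _ x hSne
  have hj₀M : t < Mc x j₀ := (Finset.mem_filter.1 hj₀S).2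
  have hj₀L : Lc x j₀ ≤ t := by
    by_cases hne : (univ.filter (fun i => x i < x j₀)).Nonempty
    · obtain ⟨i₀, hi₀S, hmax'⟩ := Finset.exists_max_image _ x hne
      have hi₀lt : x i₀ < x j₀ := (Finset.mem_filter.1 hi₀S).2
      have h1 : Lc x j₀ ≤ Mc x i₀ := by
        apply Finset.card_le_card
        intro i hi
        rw [Finset.mem_filter] at hi ⊢
        exact ⟨Finset.mem_univ _, hmax' i (Finset.mem_filter.2 ⟨Finset.mem_univ _, hi.2⟩)⟩
      have h2 : Mc x i₀ ≤ t := by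
        by_contra h
        push_neg at h
        have : i₀ ∈ univ.filter (fun j => t < Mc x j) :=
          Finset.mem_filter.2 ⟨Finset.mem_univ _, h⟩
        exact absurd hi₀lt (not_lt.2 (hmin i₀ this))
      exact h1.trans h2
    · rw [Finset.not_nonempty_iff_eq_empty] at hne
      simp [Lc, hne]
  refine ⟨j₀, hj₀L, hj₀M, ?_⟩
  ext j
  simp only [Finset.mem_filter, Finset.mem_univ, true_and]
  constructor
  · rintro ⟨hL, hM⟩
    rcases lt_trichotomy (x j) (x j₀) with h | h | h
    · exact absurd ((Mc_le_Lc_of_lt h).trans hj₀L) (not_le.2 hM)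
    · exact h
    · exact absurd ((Mc_le_Lc_of_lt h).trans hL) (not_le.2 hj₀M)
  · intro h
    rw [Lc_eq_of_eq h, Mc_eq_of_eq h]
    exact ⟨hj₀L, hj₀M⟩


lemma measurable_Lc (j : Fin m) : Measurable (fun x : Fin m → ℝ => (Lc x j : ℝ)) := by
  have h : (fun x : Fin m → ℝ => (Lc x j : ℝ))
      = fun x => ∑ i : Fin m, if x i < x j then (1:ℝ) else 0 := by
    funext x
    rw [Lc, Finset.card_filter]
    push_cast [apply_ite (Nat.cast : ℕ → ℝ)]
    rfl
  rw [h]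
  exact Finset.measurable_sum _ fun i _ =>
    Measurable.ite (measurableSet_lt (measurable_pi_apply i) (measurable_pi_apply j))
      measurable_const measurable_const

lemma measurable_Ec (j : Fin m) : Measurable (fun x : Fin m → ℝ => (Ec x j : ℝ)) := by
  have h : (fun x : Fin m → ℝ => (Ec x j : ℝ))
      = fun x => ∑ i : Fin m, if x i = x j then (1:ℝ) else 0 := by
    funext x
    rw [Ec, Finset.card_filter]
    push_cast [apply_ite (Nat.cast : ℕ → ℝ)]
    rfl
  rw [h]
  exact Finset.measurable_sum _ fun i _ =>
    Measurable.ite (measurableSet_eq_fun (measurable_pi_apply i) (measurable_pi_apply j))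
      measurable_const measurable_const

lemma measurable_g (c : ℝ) (j : Fin m) :
    Measurable (fun x : Fin m → ℝ => (c - Lc x j) / Ec x j) :=
  (measurable_const.sub (measurable_Lc j)).div (measurable_Ec j)

lemma measurable_F (c : ℝ) (j : Fin m) :
    Measurable (fun x : Fin m → ℝ => min (max ((c - Lc x j) / Ec x j) 0) 1) :=
  ((measurable_g c j).max measurable_const).min measurable_const

lemma F_nonneg (c : ℝ) (x : Fin m → ℝ) (j : Fin m) :
    0 ≤ min (max ((c - Lc x j) / Ec x j) 0) 1 :=
  le_min (le_max_right _ _) zero_le_one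

lemma Lc_comp_perm (x : Fin m → ℝ) (π : Equiv.Perm (Fin m)) (j : Fin m) :
    Lc (x ∘ π) j = Lc x (π j) := by
  rw [Lc, Lc]
  apply Finset.card_bij' (fun i _ => π i) (fun i _ => π.symm i) <;>
    simp [Function.comp]

lemma Ec_comp_perm (x : Fin m → ℝ) (π : Equiv.Perm (Fin m)) (j : Fin m) :
    Ec (x ∘ π) j = Ec x (π j) := by
  rw [Ec, Ec]
  apply Finset.card_bij' (fun i _ => π i) (fun i _ => π.symm i) <;>
    simp [Function.comp]

end SmoothedPV

namespace SmoothedPV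

noncomputable def gstep (c : ℝ) (t : ℕ) : ℝ := min c (t + 1) - min c t

lemma sum_range_gstep (c : ℝ) (hc : 0 ≤ c) (k : ℕ) :
    ∑ t ∈ Finset.range k, gstep c t = min c k := by
  have h : ∀ t : ℕ, gstep c t = min c ((t+1 : ℕ) : ℝ) - min c (t : ℝ) := by
    intro t; rw [gstep, Nat.cast_add_one]
  rw [Finset.sum_congr rfl (fun t _ => h t),
    Finset.sum_range_sub (f := fun t : ℕ => min c (t : ℝ))]
  simp [min_eq_right hc]

lemma sum_Ico_gstep (c : ℝ) (hc : 0 ≤ c) (a b : ℕ) (hab : a ≤ b) :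
    ∑ t ∈ Finset.Ico a b, gstep c t = min c b - min c a := by
  rw [Finset.sum_Ico_eq_sub _ hab, sum_range_gstep c hc, sum_range_gstep c hc]

lemma term_eq (x : Fin m → ℝ) (j : Fin m) (c : ℝ) (hc : 0 ≤ c) :
    min (max ((c - Lc x j) / Ec x j) 0) 1
      = (min c (Mc x j) - min c (Lc x j)) / Ec x j := by
  have hE : (0:ℝ) < Ec x j := by exact_mod_cast Ec_pos x j
  have hM : (Mc x j : ℝ) = Lc x j + Ec x j := by exact_mod_cast Mc_eq x j
  have hLM : (Lc x j : ℝ) ≤ Mc x j := by rw [hM]; linarith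
  rcases le_or_gt c (Lc x j) with h | h
  · rw [min_eq_left h, min_eq_left (h.trans hLM),
      max_eq_right (div_nonpos_of_nonpos_of_nonneg (by linarith) hE.le)]
    simp [zero_min, (by norm_num : min (0:ℝ) 1 = 0)]
  · rw [max_eq_left (div_nonneg (by linarith) hE.le), min_eq_right h.le]
    rcases le_or_gt c (Mc x j) with h2 | h2
    · rw [min_eq_left h2, min_eq_left ((div_le_one hE).2 (by linarith))]
    · rw [min_eq_right h2.le, min_eq_right ((one_le_div hE).2 (by linarith))]
      rw [hM]; field_simp; ring

lemma sum_term (x : Fin m → ℝ) (c : ℝ) (h0 : 0 ≤ c) (h1 : c ≤ m) :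
    ∑ j, min (max ((c - Lc x j) / Ec x j) 0) 1 = c := by
  have key : ∀ j : Fin m,
      min (max ((c - (Lc x j : ℝ)) / Ec x j) 0) 1
        = ∑ t ∈ Finset.range m, (if Lc x j ≤ t ∧ t < Mc x j then gstep c t / Ec x j else 0) := by
    intro j
    have hLM : Lc x j ≤ Mc x j := (Mc_eq x j) ▸ Nat.le_add_right _ _
    have hfil : (Finset.range m).filter (fun t => Lc x j ≤ t ∧ t < Mc x j)
        = Finset.Ico (Lc x j) (Mc x j) := by
      ext t
      have := Mc_le x j
      simp only [Finset.mem_filter, Finset.mem_range, Finset.mem_Ico]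
      omega
    rw [← Finset.sum_filter, hfil, term_eq x j c h0, ← sum_Ico_gstep c h0 _ _ hLM,
      Finset.sum_div]
  rw [Finset.sum_congr rfl (fun j _ => key j), Finset.sum_comm]
  have inner : ∀ t ∈ Finset.range m,
      (∑ j : Fin m, if Lc x j ≤ t ∧ t < Mc x j then gstep c t / Ec x j else 0)
        = gstep c t := by
    intro t ht
    rw [Finset.mem_range] at ht
    obtain ⟨j₀, hL, hM, hset⟩ := slice x t ht
    have hE : (Ec x j₀ : ℝ) ≠ 0 := by
      have := Ec_pos x j₀; positivity
    rw [← Finset.sum_filter, hset,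
      Finset.sum_congr rfl (fun j hj => by
        rw [Ec_eq_of_eq (Finset.mem_filter.1 hj).2] :
        ∀ j ∈ _, gstep c t / (Ec x j : ℝ) = gstep c t / Ec x j₀),
      Finset.sum_const]
    have hcard : (Finset.univ.filter (fun j => x j = x j₀)).card = Ec x j₀ := rfl
    rw [hcard, nsmul_eq_mul, mul_div_cancel₀ _ hE]
  rw [Finset.sum_congr rfl inner, sum_range_gstep c h0, min_eq_left h1]


end SmoothedPV


/-- For exchangeable `α 0, …, α n` and `τ` uniform on `[0,1]`
independent of them, the smoothed p-value
`P := (|{i : α i < α last}| + τ·|{i : α i = α last}|)/(n+1)` satisfies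
`Prob(P ≤ ε) = ε` for every `ε ∈ [0,1]`; in particular the conservative p-value
`P' := |{i : α i ≤ α last}|/(n+1)` satisfies `Prob(P' ≤ ε) ≤ ε`. -/
theorem smoothed_pvalue_exact_and_conservative
    {Ω : Type*} [MeasurableSpace Ω] (μ : Measure Ω) [IsProbabilityMeasure μ]
    (n : ℕ) (α : Fin (n + 1) → Ω → ℝ) (hmeas : ∀ i, Measurable (α i))
    (hexch : ∀ π : Equiv.Perm (Fin (n + 1)),
      Measure.map (fun ω => fun i => α (π i) ω) μ
        = Measure.map (fun ω => fun i => α i ω) μ)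
    (τ : Ω → ℝ) (hτmeas : Measurable τ)
    (hτunif : Measure.map τ μ = volume.restrict (Set.Icc (0 : ℝ) 1))
    (hindep : IndepFun τ (fun ω => fun i => α i ω) μ)
    (P P' : Ω → ℝ)
    (hP : P = fun ω =>
      ((Finset.univ.filter
          (fun i : Fin (n + 1) => α i ω < α (Fin.last n) ω)).card
        + τ ω * (Finset.univ.filter
          (fun i : Fin (n + 1) => α i ω = α (Fin.last n) ω)).card) / (n + 1))
    (hP' : P' = fun ω =>
      ((Finset.univ.filter
          (fun i : Fin (n + 1) => α i ω ≤ α (Fin.last n) ω)).card : ℝ) / (n + 1)) :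
    (∀ ε : ℝ, ε ∈ Set.Icc (0 : ℝ) 1 →
        μ {ω | P ω ≤ ε} = ENNReal.ofReal ε)
      ∧ ∀ ε : ℝ, ε ∈ Set.Icc (0 : ℝ) 1 →
        μ {ω | P' ω ≤ ε} ≤ ENNReal.ofReal ε := by
  classical
  have hαv : Measurable (fun ω => fun i => α i ω) := measurable_pi_lambda _ hmeas
  set αv : Ω → (Fin (n+1) → ℝ) := fun ω => fun i => α i ω with hαvdef
  set ν : Measure (Fin (n+1) → ℝ) := Measure.map αv μ with hν
  haveI : IsProbabilityMeasure ν := Measure.isProbabilityMeasure_map hαv.aemeasurable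
  -- relate counts in the statement to Lc/Ec/Mc
  have hLcω : ∀ ω, ((Finset.univ.filter
      (fun i : Fin (n + 1) => α i ω < α (Fin.last n) ω)).card : ℝ)
      = (SmoothedPV.Lc (αv ω) (Fin.last n) : ℝ) := by
    intro ω; rw [SmoothedPV.Lc]
  have hEcω : ∀ ω, ((Finset.univ.filter
      (fun i : Fin (n + 1) => α i ω = α (Fin.last n) ω)).card : ℝ)
      = (SmoothedPV.Ec (αv ω) (Fin.last n) : ℝ) := by
    intro ω; rw [SmoothedPV.Ec]
  have hMcω : ∀ ω, ((Finset.univ.filter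
      (fun i : Fin (n + 1) => α i ω ≤ α (Fin.last n) ω)).card : ℝ)
      = (SmoothedPV.Mc (αv ω) (Fin.last n) : ℝ) := by
    intro ω; rw [SmoothedPV.Mc]
  have hnpos : (0:ℝ) < (n:ℝ) + 1 := by positivity
  have main : ∀ ε : ℝ, ε ∈ Set.Icc (0:ℝ) 1 → μ {ω | P ω ≤ ε} = ENNReal.ofReal ε := by
    intro ε hε
    obtain ⟨hε0, hε1⟩ := hε
    set c : ℝ := ε * ((n:ℝ) + 1) with hc
    have hc0 : 0 ≤ c := by positivity
    have hc1 : c ≤ ((n+1 : ℕ) : ℝ) := by push_cast; nlinarith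
    set G : Fin (n+1) → (Fin (n+1) → ℝ) → ENNReal := fun j x =>
      ENNReal.ofReal (min (max ((c - SmoothedPV.Lc x j) / SmoothedPV.Ec x j) 0) 1) with hG
    have hGmeas : ∀ j, Measurable (G j) := fun j =>
      (SmoothedPV.measurable_F c j).ennreal_ofReal
    -- step 1 : express the event via the pair (αv, τ)
    set s : Set ((Fin (n+1) → ℝ) × ℝ) := {p | p.2 ≤
      (c - SmoothedPV.Lc p.1 (Fin.last n)) / SmoothedPV.Ec p.1 (Fin.last n)} with hs
    have hsmeas : MeasurableSet s :=
      measurableSet_le measurable_snd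
        ((SmoothedPV.measurable_g c (Fin.last n)).comp measurable_fst)
    have hset : {ω | P ω ≤ ε} = (fun ω => (αv ω, τ ω)) ⁻¹' s := by
      ext ω
      have hE : (0:ℝ) < (SmoothedPV.Ec (αv ω) (Fin.last n) : ℝ) := by
        exact_mod_cast SmoothedPV.Ec_pos (αv ω) (Fin.last n)
      simp only [hP, Set.mem_setOf_eq, Set.mem_preimage, hs]
      rw [div_le_iff₀ hnpos, hLcω ω, hEcω ω, le_div_iff₀ hE]
      constructor <;> intro <;> linarith
    have hpair : Measure.map (fun ω => (αv ω, τ ω)) μ = ν.prod (Measure.map τ μ) :=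
      (indepFun_iff_map_prod_eq_prod_map_map hαv.aemeasurable hτmeas.aemeasurable).1
        hindep.symm
    have hunif : ∀ a : ℝ, (Measure.map τ μ) (Set.Iic a)
        = ENNReal.ofReal (min (max a 0) 1) := by
      intro a
      rw [hτunif, Measure.restrict_apply measurableSet_Iic]
      rcases lt_or_ge a 0 with h | h
      · have : Set.Iic a ∩ Set.Icc (0:ℝ) 1 = ∅ := by
          ext t; simp only [Set.mem_inter_iff, Set.mem_Iic, Set.mem_Icc,
            Set.mem_empty_iff_false, iff_false, not_and]
          intro h1 h2; linarith
        rw [this, measure_empty, max_eq_right h.le]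
        norm_num
      · have : Set.Iic a ∩ Set.Icc (0:ℝ) 1 = Set.Icc 0 (min a 1) := by
          ext t; simp only [Set.mem_inter_iff, Set.mem_Iic, Set.mem_Icc, le_min_iff]
          constructor
          · rintro ⟨h1, h2, h3⟩; exact ⟨h2, h1, h3⟩
          · rintro ⟨h1, h2, h3⟩; exact ⟨h2, h1, h3⟩
        rw [this, Real.volume_Icc, max_eq_left h]
        norm_num [min_comm]
    have h2 : μ {ω | P ω ≤ ε} = ∫⁻ x, G (Fin.last n) x ∂ν := by
      rw [hset, ← Measure.map_apply (hαv.prodMk hτmeas) hsmeas, hpair,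
        Measure.prod_apply hsmeas]
      refine lintegral_congr fun x => ?_
      have : (Prod.mk x ⁻¹' s) = Set.Iic
          ((c - SmoothedPV.Lc x (Fin.last n)) / SmoothedPV.Ec x (Fin.last n)) := rfl
      rw [this, hunif]
    -- step 2 : exchangeability
    have step2 : ∀ j : Fin (n+1), ∫⁻ x, G j x ∂ν = ∫⁻ x, G (Fin.last n) x ∂ν := by
      intro j
      set π := Equiv.swap j (Fin.last n) with hπ
      have hπv : Measurable (fun ω => fun i => α (π i) ω) :=
        measurable_pi_lambda _ (fun i => hmeas _)
      have e2 : ∀ ω, G j (αv ω) = G (Fin.last n) (fun i => α (π i) ω) := by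
        intro ω
        have hcomp : (fun i => α (π i) ω) = (αv ω) ∘ π := rfl
        rw [hcomp, hG]
        simp only
        rw [SmoothedPV.Lc_comp_perm, SmoothedPV.Ec_comp_perm, Equiv.swap_apply_right]
      rw [hν, lintegral_map (hGmeas j) hαv, lintegral_congr e2,
        ← lintegral_map (hGmeas (Fin.last n)) hπv, hexch π]
    -- step 3 : summation
    have sum3 : ∑ j : Fin (n+1), ∫⁻ x, G j x ∂ν = ENNReal.ofReal c := by
      rw [← lintegral_finset_sum _ (fun j _ => hGmeas j)]
      have hptwise : ∀ x, ∑ j : Fin (n+1), G j x = ENNReal.ofReal c := by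
        intro x
        rw [hG]
        simp only
        rw [← ENNReal.ofReal_sum_of_nonneg (fun j _ => SmoothedPV.F_nonneg c x j)]
        congr 1
        exact SmoothedPV.sum_term x c hc0 hc1
      rw [lintegral_congr hptwise, lintegral_const, measure_univ, mul_one]
    have hsum' : ∑ j : Fin (n+1), ∫⁻ x, G j x ∂ν
        = ((n+1 : ℕ) : ENNReal) * ∫⁻ x, G (Fin.last n) x ∂ν := by
      rw [Finset.sum_congr rfl (fun j _ => step2 j), Finset.sum_const,
        Finset.card_univ, Fintype.card_fin, nsmul_eq_mul]
    have hN0 : ((n+1:ℕ) : ENNReal) ≠ 0 := by simp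
    have hNtop : ((n+1:ℕ) : ENNReal) ≠ ⊤ := by simp
    have hkey : ((n+1:ℕ) : ENNReal) * (∫⁻ x, G (Fin.last n) x ∂ν)
        = ((n+1:ℕ) : ENNReal) * ENNReal.ofReal ε := by
      rw [← hsum', sum3]
      rw [show ((n+1:ℕ) : ENNReal) = ENNReal.ofReal ((n:ℝ)+1) by
        rw [← ENNReal.ofReal_natCast]; norm_num]
      rw [← ENNReal.ofReal_mul (by positivity), hc]
      ring_nf
    rw [h2]
    exact (ENNReal.mul_right_inj hN0 hNtop).1 hkey
  refine ⟨main, ?_⟩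
  intro ε hε
  have hτ1 : μ {ω | 1 < τ ω} = 0 := by
    have hpre : {ω | 1 < τ ω} = τ ⁻¹' (Set.Ioi 1) := rfl
    rw [hpre, ← Measure.map_apply hτmeas measurableSet_Ioi, hτunif,
      Measure.restrict_apply measurableSet_Ioi]
    have : Set.Ioi (1:ℝ) ∩ Set.Icc 0 1 = ∅ := by
      ext t; simp only [Set.mem_inter_iff, Set.mem_Ioi, Set.mem_Icc,
        Set.mem_empty_iff_false, iff_false, not_and]
      intro h1 h2; linarith
    rw [this, measure_empty]
  have hsub : {ω | P' ω ≤ ε} ⊆ {ω | P ω ≤ ε} ∪ {ω | 1 < τ ω} := by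
    intro ω hω
    by_cases hτω : 1 < τ ω
    · exact Or.inr hτω
    · push_neg at hτω
      left
      simp only [Set.mem_setOf_eq, hP, hP'] at hω ⊢
      have hE0 : (0:ℝ) ≤ ((Finset.univ.filter
          (fun i : Fin (n + 1) => α i ω = α (Fin.last n) ω)).card : ℝ) :=
        Nat.cast_nonneg _
      have hMsum : ((Finset.univ.filter
          (fun i : Fin (n + 1) => α i ω ≤ α (Fin.last n) ω)).card : ℝ)
          = ((Finset.univ.filter
            (fun i : Fin (n + 1) => α i ω < α (Fin.last n) ω)).card : ℝ)
          + ((Finset.univ.filter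
            (fun i : Fin (n + 1) => α i ω = α (Fin.last n) ω)).card : ℝ) := by
        rw [hLcω ω, hEcω ω, hMcω ω]
        exact_mod_cast congrArg (Nat.cast : ℕ → ℝ)
          (SmoothedPV.Mc_eq (αv ω) (Fin.last n))
      have hτE : τ ω * ((Finset.univ.filter
          (fun i : Fin (n + 1) => α i ω = α (Fin.last n) ω)).card : ℝ)
          ≤ ((Finset.univ.filter
            (fun i : Fin (n + 1) => α i ω = α (Fin.last n) ω)).card : ℝ) := by
        nlinarith
      refine le_trans ((div_le_div_iff_of_pos_right hnpos).2 ?_) hω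
      linarith
  calc μ {ω | P' ω ≤ ε} ≤ μ ({ω | P ω ≤ ε} ∪ {ω | 1 < τ ω}) := measure_mono hsub
    _ ≤ μ {ω | P ω ≤ ε} + μ {ω | 1 < τ ω} := measure_union_le _ _
    _ = ENNReal.ofReal ε := by rw [main ε hε, hτ1, add_zero]
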